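/- Suppose G₁, …, G_N are i.i.d. random perturbations of a ground truth DAG G = (V, A) with parameters δ₁ = 0.5 − ε (edge flip probability, ε > 0) and δ₂ ∈ [0,1] (spurious edge probability). Let Ĝ be the weighted ensemble graph whose arc weights are the normalized counts of each arc's occurrences across the N graphs. Then P(G ⊆ MAS(Ĝ)) ≥ 1 − 2|A| exp(−Nε²/2) − 2U exp(−Nε² / (6U²δ₂ + 2Uε)), where U = |V|(|V|−1)/2 − |A| is the number of unconnected pairs in G and MAS(Ĝ) is a maximum-weight acyclic subgraph of Ĝ. -/

import Mathlib

open MeasureTheory ProbabilityTheory Real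
set_option maxHeartbeats 2000000


/-- A relation is acyclic if no vertex reaches itself by a nonempty directed walk. -/
def Acyclic {V : Type*} (R : V → V → Prop) : Prop :=
  ∀ v : V, ¬ Relation.TransGen R v v

/-- `H` is a maximum-weight acyclic subgraph for the weight function `w`
(candidate arcs are all ordered pairs of distinct vertices; arcs of zero weight
are treated as existing). -/
def IsMaxAcyclicSubgraph {V : Type*} [Fintype V] [DecidableEq V]
    (w : V × V → ℝ) (H : Finset (V × V)) : Prop :=
  H ⊆ (Finset.univ : Finset V).offDiag ∧
  Acyclic (fun a b => (a, b) ∈ H) ∧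
  ∀ H' : Finset (V × V), H' ⊆ (Finset.univ : Finset V).offDiag →
    Acyclic (fun a b => (a, b) ∈ H') → ∑ e ∈ H', w e ≤ ∑ e ∈ H, w e


section AuxLemmas

lemma exp_le_quad {u : ℝ} (hu : u ≤ 1) : Real.exp u ≤ 1 + u + (3/4) * u^2 := by
  rcases le_or_gt (-1) u with h | h
  · have habs : |u| ≤ 1 := abs_le.2 ⟨h, hu⟩
    have := Real.exp_bound habs (n := 2) (by norm_num)
    have h2 : |Real.exp u - (1 + u)| ≤ |u|^2 * (3 / (2 * 2)) := by
      simpa [Finset.sum_range_succ, Nat.factorial] using this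
    have := abs_le.1 h2
    have := this.2
    rw [sq_abs] at this
    nlinarith
  · have h1 : Real.exp u ≤ Real.exp (-1) := Real.exp_le_exp.2 h.le
    have h2 : Real.exp (-1) ≤ 3/4 := by
      rw [Real.exp_neg]
      rw [inv_le_comm₀ (Real.exp_pos 1) (by norm_num)]
      nlinarith [Real.exp_one_gt_d9]
    nlinarith

lemma iIndepFun_comp_right {ι κ Ω β : Type*} [MeasurableSpace Ω] [mβ : MeasurableSpace β]
    {μ : Measure Ω} {f : ι → Ω → β}
    (h : iIndepFun f μ) {g : κ → ι} (hg : Function.Injective g) :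
    iIndepFun (fun k => f (g k)) μ := by
  classical
  rw [iIndepFun_iff_measure_inter_preimage_eq_mul] at h ⊢
  intro S sets hsets
  set sets' : ι → Set β := fun i =>
    if hex : ∃ k, k ∈ S ∧ g k = i then sets hex.choose else Set.univ with hsets'
  have key : ∀ k ∈ S, sets' (g k) = sets k := by
    intro k hk
    have hex : ∃ k', k' ∈ S ∧ g k' = g k := ⟨k, hk, rfl⟩
    simp only [hsets', dif_pos hex]
    have := hex.choose_spec.2
    rw [hg this]
  have hmeas' : ∀ i ∈ S.image g, MeasurableSet (sets' i) := by
    intro i hi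
    rcases Finset.mem_image.1 hi with ⟨k, hk, rfl⟩
    rw [key k hk]; exact hsets k hk
  have := h (S.image g) hmeas'
  rw [Finset.set_biInter_finset_image, Finset.prod_image (fun a ha b hb hab => hg hab)] at this
  calc μ (⋂ k ∈ S, f (g k) ⁻¹' sets k) = μ (⋂ k ∈ S, f (g k) ⁻¹' sets' (g k)) := by
        congr 1; exact Set.iInter₂_congr fun k hk => by rw [key k hk]
    _ = ∏ k ∈ S, μ (f (g k) ⁻¹' sets' (g k)) := this
    _ = ∏ k ∈ S, μ (f (g k) ⁻¹' sets k) := Finset.prod_congr rfl fun k hk => by rw [key k hk]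

lemma mas_contains {V : Type*} [Fintype V] [DecidableEq V] [LinearOrder V]
    (A : Finset (V × V))
    (hacyc : Acyclic (fun a b => (a, b) ∈ A))
    (hirr : ∀ v : V, (v, v) ∉ A)
    (w : V × V → ℝ)
    (harc : ∀ e ∈ A,
      (∑ p ∈ (Finset.univ.offDiag.filter
          (fun p : V × V => p.1 < p.2 ∧ p ∉ A ∧ p.swap ∉ A)), |w p - w p.swap|) < w e - w e.swap
      ∧ (∑ p ∈ (Finset.univ.offDiag.filter
          (fun p : V × V => p.1 < p.2 ∧ p ∉ A ∧ p.swap ∉ A)), |w p - w p.swap|) < w e)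
    (H : Finset (V × V)) (hH : IsMaxAcyclicSubgraph w H) :
    ∀ e ∈ A, e ∈ H := by
  classical
  set Unc : Finset (V × V) :=
    Finset.univ.offDiag.filter (fun p : V × V => p.1 < p.2 ∧ p ∉ A ∧ p.swap ∉ A) with hUnc
  set B : ℝ := ∑ p ∈ Unc, |w p - w p.swap| with hB
  have hB0 : 0 ≤ B := Finset.sum_nonneg fun p _ => abs_nonneg _
  -- linear extension of the DAG order
  let r : V → V → Prop := fun a b => a = b ∨ Relation.TransGen (fun x y => (x, y) ∈ A) a b
  haveI : IsRefl V r := ⟨fun a => Or.inl rfl⟩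
  haveI : IsTrans V r := by
    constructor
    intro a b c hab hbc
    rcases hab with rfl | hab
    · exact hbc
    · rcases hbc with rfl | hbc
      · exact Or.inr hab
      · exact Or.inr (hab.trans hbc)
  haveI : IsAntisymm V r := by
    constructor
    intro a b hab hba
    rcases hab with rfl | hab
    · rfl
    · rcases hba with rfl | hba
      · rfl
      · exact absurd (hab.trans hba) (hacyc a)
  haveI hpo : IsPartialOrder V r := {}
  obtain ⟨ts, hts, hrts⟩ := extend_partialOrder r
  haveI := hts
  have hts_total : ∀ a b : V, ts a b ∨ ts b a := fun a b => total_of ts a b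
  have hts_antisymm : ∀ a b : V, ts a b → ts b a → a = b := fun a b => antisymm_of ts
  have hts_trans : ∀ a b c : V, ts a b → ts b c → ts a c := fun a b c => trans_of ts
  set lt' : V → V → Prop := fun a b => ts a b ∧ a ≠ b with hlt'
  have lt'_trans : ∀ a b c : V, lt' a b → lt' b c → lt' a c := by
    intro a b c ⟨h1, h2⟩ ⟨h3, h4⟩
    refine ⟨hts_trans _ _ _ h1 h3, fun hac => ?_⟩
    subst hac
    exact h2 (hts_antisymm _ _ h1 h3)
  have lt'_total : ∀ a b : V, a ≠ b → lt' a b ∨ lt' b a := by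
    intro a b hne
    rcases hts_total a b with h | h
    · exact Or.inl ⟨h, hne⟩
    · exact Or.inr ⟨h, hne.symm⟩
  have lt'_asymm : ∀ a b : V, lt' a b → ¬ lt' b a := by
    intro a b ⟨h1, h2⟩ ⟨h3, _⟩
    exact h2 (hts_antisymm _ _ h1 h3)
  have lt'_A : ∀ e ∈ A, lt' e.1 e.2 := by
    intro e he
    have hne : e.1 ≠ e.2 := by
      intro h
      have : e = (e.2, e.2) := by rw [Prod.ext_iff]; exact ⟨h, rfl⟩
      rw [this] at he
      exact hirr e.2 he
    refine ⟨hrts _ _ (Or.inr (Relation.TransGen.single ?_)), hne⟩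
    simpa using he
  obtain ⟨hHsub, hHacyc, hHmax⟩ := hH
  have hHne : ∀ q : V × V, q ∈ H → q.1 ≠ q.2 := fun q hq => (Finset.mem_offDiag.1 (hHsub hq)).2.2
  have h2cyc : ∀ q : V × V, q ∈ H → q.swap ∉ H := by
    intro q hq hq'
    refine hHacyc q.1 (Relation.TransGen.head (b := q.2) ?_ (Relation.TransGen.single ?_))
    · simpa using hq
    · exact hq'
  intro e he
  by_contra heH
  obtain ⟨u, v⟩ := e
  have huv : lt' u v := lt'_A (u, v) he
  have hvu_not : ¬ lt' v u := lt'_asymm u v huv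
  set φ : V × V → V × V := fun q => if lt' q.1 q.2 then q else q.swap with hφ
  have hφ_pos : ∀ q : V × V, lt' q.1 q.2 → φ q = q := by
    intro q h; simp only [hφ]; rw [if_pos h]
  have hφ_neg : ∀ q : V × V, ¬ lt' q.1 q.2 → φ q = q.swap := by
    intro q h; simp only [hφ]; rw [if_neg h]
  have hφ_cases : ∀ q : V × V, φ q = q ∨ φ q = q.swap := by
    intro q
    by_cases h : lt' q.1 q.2
    · exact Or.inl (hφ_pos q h)
    · exact Or.inr (hφ_neg q h)
  have hφ_lt : ∀ q : V × V, q.1 ≠ q.2 → lt' (φ q).1 (φ q).2 := by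
    intro q hne
    by_cases h : lt' q.1 q.2
    · rw [hφ_pos q h]; exact h
    · rcases lt'_total q.1 q.2 hne with h' | h'
      · exact absurd h' h
      · rw [hφ_neg q h]; exact h'
  have hφ_inj : ∀ q₁ ∈ H, ∀ q₂ ∈ H, φ q₁ = φ q₂ → q₁ = q₂ := by
    intro q₁ h₁ q₂ h₂ heq
    rcases hφ_cases q₁ with e₁ | e₁ <;> rcases hφ_cases q₂ with e₂ | e₂ <;>
      rw [e₁, e₂] at heq
    · exact heq
    · exact absurd (heq ▸ h₁) (h2cyc q₂ h₂)
    · exact absurd (by rw [heq]; exact h₂ : q₁.swap ∈ H) (h2cyc q₁ h₁)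
    · exact Prod.swap_injective heq
  -- canonicalization map into Unc
  set ψ : V × V → V × V := fun q => if q.1 < q.2 then q else q.swap with hψ
  have hψ_pos : ∀ q : V × V, q.1 < q.2 → ψ q = q := by
    intro q h; simp only [hψ]; rw [if_pos h]
  have hψ_neg : ∀ q : V × V, ¬ q.1 < q.2 → ψ q = q.swap := by
    intro q h; simp only [hψ]; rw [if_neg h]
  -- key: for any K ⊆ H, the total flip loss is at least -B
  have key : ∀ K : Finset (V × V), K ⊆ H → -B ≤ ∑ q ∈ K, (w (φ q) - w q) := by
    intro K hK
    set Kb : Finset (V × V) := K.filter (fun q => ¬ lt' q.1 q.2) with hKb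
    have hsum_eq : ∑ q ∈ K, (w (φ q) - w q) = ∑ q ∈ Kb, (w (φ q) - w q) := by
      refine (Finset.sum_subset (Finset.filter_subset _ _) ?_).symm
      intro q hq hq'
      have hlt : lt' q.1 q.2 := by
        by_contra hcon
        exact hq' (Finset.mem_filter.2 ⟨hq, hcon⟩)
      rw [hφ_pos q hlt, sub_self]
    set Kbs : Finset (V × V) := Kb.filter (fun q => q.swap ∉ A) with hKbs
    have hstep1 : ∑ q ∈ Kb, (if q.swap ∈ A then (0:ℝ) else -|w q.swap - w q|)
        ≤ ∑ q ∈ Kb, (w (φ q) - w q) := by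
      refine Finset.sum_le_sum ?_
      intro q hq
      obtain ⟨hqK, hqb⟩ := Finset.mem_filter.1 hq
      rw [hφ_neg q hqb]
      by_cases hA : q.swap ∈ A
      · rw [if_pos hA]
        have hh := (harc q.swap hA).1
        rw [Prod.swap_swap] at hh
        linarith
      · rw [if_neg hA]
        exact neg_abs_le _
    have hifsum : ∑ q ∈ Kb, (if q.swap ∈ A then (0:ℝ) else -|w q.swap - w q|)
        = ∑ q ∈ Kbs, (-|w q.swap - w q|) := by
      have h1 : ∑ q ∈ Kb, (if q.swap ∈ A then (0:ℝ) else -|w q.swap - w q|)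
          = ∑ q ∈ Kbs, (if q.swap ∈ A then (0:ℝ) else -|w q.swap - w q|) := by
        refine (Finset.sum_subset (Finset.filter_subset _ _) ?_).symm
        intro q hq hq'
        have hA : q.swap ∈ A := by
          by_contra hcon
          exact hq' (Finset.mem_filter.2 ⟨hq, hcon⟩)
        rw [if_pos hA]
      rw [h1]
      refine Finset.sum_congr rfl ?_
      intro q hq
      rw [if_neg (Finset.mem_filter.1 hq).2]
    have hKbsH : ∀ q ∈ Kbs, q ∈ H := by
      intro q hq
      exact hK (Finset.mem_filter.1 (Finset.mem_filter.1 hq).1).1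
    have hψ_inj : ∀ q₁ ∈ Kbs, ∀ q₂ ∈ Kbs, ψ q₁ = ψ q₂ → q₁ = q₂ := by
      intro q₁ h₁ q₂ h₂ heq
      have h₁' := hKbsH q₁ h₁
      have h₂' := hKbsH q₂ h₂
      by_cases c₁ : q₁.1 < q₁.2 <;> by_cases c₂ : q₂.1 < q₂.2
      · rw [hψ_pos q₁ c₁, hψ_pos q₂ c₂] at heq; exact heq
      · rw [hψ_pos q₁ c₁, hψ_neg q₂ c₂] at heq
        exact absurd (heq ▸ h₁') (h2cyc q₂ h₂')
      · rw [hψ_neg q₁ c₁, hψ_pos q₂ c₂] at heq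
        exact absurd (by rw [heq]; exact h₂' : q₁.swap ∈ H) (h2cyc q₁ h₁')
      · rw [hψ_neg q₁ c₁, hψ_neg q₂ c₂] at heq
        exact Prod.swap_injective heq
    have himg_sub : Kbs.image ψ ⊆ Unc := by
      intro p hp
      obtain ⟨q, hq, rfl⟩ := Finset.mem_image.1 hp
      obtain ⟨hqKb, hqsA⟩ := Finset.mem_filter.1 hq
      obtain ⟨hqK, hqnlt⟩ := Finset.mem_filter.1 hqKb
      have hqH : q ∈ H := hK hqK
      have hqne : q.1 ≠ q.2 := hHne q hqH
      have hqA : q ∉ A := by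
        intro hcon
        exact hqnlt (lt'_A q hcon)
      rw [hUnc]
      by_cases c : q.1 < q.2
      · rw [hψ_pos q c]
        exact Finset.mem_filter.2 ⟨Finset.mem_offDiag.2 ⟨Finset.mem_univ _, Finset.mem_univ _, hqne⟩,
          c, hqA, hqsA⟩
      · rw [hψ_neg q c]
        have hqlt : q.2 < q.1 := (hqne.lt_or_gt).resolve_left c
        refine Finset.mem_filter.2 ⟨Finset.mem_offDiag.2 ⟨Finset.mem_univ _, Finset.mem_univ _, hqne.symm⟩,
          hqlt, hqsA, ?_⟩
        rw [Prod.swap_swap]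
        exact hqA
    have habs_eq : ∑ q ∈ Kbs, |w q.swap - w q| = ∑ p ∈ Kbs.image ψ, |w p - w p.swap| := by
      rw [Finset.sum_image hψ_inj]
      refine Finset.sum_congr rfl ?_
      intro q hq
      by_cases c : q.1 < q.2
      · rw [hψ_pos q c, abs_sub_comm]
      · rw [hψ_neg q c, Prod.swap_swap]
    have hBbound : ∑ q ∈ Kbs, |w q.swap - w q| ≤ B := by
      rw [habs_eq, hB]
      exact Finset.sum_le_sum_of_subset_of_nonneg himg_sub (fun _ _ _ => abs_nonneg _)
    have hneg : ∑ q ∈ Kbs, (-|w q.swap - w q|) = -∑ q ∈ Kbs, |w q.swap - w q| := by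
      rw [Finset.sum_neg_distrib]
    calc -B ≤ -∑ q ∈ Kbs, |w q.swap - w q| := by linarith
      _ = ∑ q ∈ Kbs, (-|w q.swap - w q|) := hneg.symm
      _ = ∑ q ∈ Kb, (if q.swap ∈ A then (0:ℝ) else -|w q.swap - w q|) := hifsum.symm
      _ ≤ ∑ q ∈ Kb, (w (φ q) - w q) := hstep1
      _ = ∑ q ∈ K, (w (φ q) - w q) := hsum_eq.symm
  -- construct the competitor H'
  have hne_uv : u ≠ v := huv.2
  set H' : Finset (V × V) := insert (u, v) (H.image φ) with hH'def
  have hsub' : H' ⊆ Finset.univ.offDiag := by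
    intro q hq
    rcases Finset.mem_insert.1 hq with rfl | hq
    · exact Finset.mem_offDiag.2 ⟨Finset.mem_univ _, Finset.mem_univ _, hne_uv⟩
    · obtain ⟨q', hq', rfl⟩ := Finset.mem_image.1 hq
      have hne' := hHne q' hq'
      rcases hφ_cases q' with h | h <;> rw [h]
      · exact Finset.mem_offDiag.2 ⟨Finset.mem_univ _, Finset.mem_univ _, hne'⟩
      · exact Finset.mem_offDiag.2 ⟨Finset.mem_univ _, Finset.mem_univ _, hne'.symm⟩
  have hstep' : ∀ a b : V, (a, b) ∈ H' → lt' a b := by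
    intro a b hab
    rcases Finset.mem_insert.1 hab with h | h
    · rw [Prod.mk.injEq] at h
      obtain ⟨rfl, rfl⟩ := h
      exact huv
    · obtain ⟨q', hq', heq⟩ := Finset.mem_image.1 h
      have hlt := hφ_lt q' (hHne q' hq')
      rw [heq] at hlt
      exact hlt
  have hacyc' : Acyclic (fun a b => (a, b) ∈ H') := by
    intro v0 hv0
    have htg : ∀ a b : V, Relation.TransGen (fun a b => (a, b) ∈ H') a b → lt' a b := by
      intro a b h
      induction h with
      | single h => exact hstep' _ _ h
      | tail h1 h2 ih => exact lt'_trans _ _ _ ih (hstep' _ _ h2)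
    exact (htg v0 v0 hv0).2 rfl
  have hmax := hHmax H' hsub' hacyc'
  have himg_sum : ∑ q ∈ H.image φ, w q = ∑ q ∈ H, w (φ q) := Finset.sum_image hφ_inj
  have hswap_uv : (u, v).swap = (v, u) := rfl
  by_cases hmem : (u, v) ∈ H.image φ
  · obtain ⟨q₀, hq₀, hφq₀⟩ := Finset.mem_image.1 hmem
    have hq₀vu : q₀ = (v, u) := by
      rcases hφ_cases q₀ with h | h
      · rw [h] at hφq₀
        exact absurd (hφq₀ ▸ hq₀) heH
      · rw [h] at hφq₀
        have : q₀.swap.swap = (u, v).swap := by rw [hφq₀]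
        rw [Prod.swap_swap] at this
        rw [this, hswap_uv]
    rw [hq₀vu] at hq₀
    have hφvu : φ (v, u) = (u, v) := by
      rw [hφ_neg (v, u) (by exact hvu_not)]
      rfl
    have hsplit : ∑ q ∈ H, (w (φ q) - w q)
        = (w (φ (v, u)) - w (v, u)) + ∑ q ∈ H.erase (v, u), (w (φ q) - w q) :=
      (Finset.add_sum_erase H _ hq₀).symm
    have hkey := key (H.erase (v, u)) (Finset.erase_subset _ _)
    have harc1 := (harc (u, v) he).1
    rw [hswap_uv] at harc1
    have hHsum : ∑ q ∈ H', w q = ∑ q ∈ H, w (φ q) := by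
      rw [hH'def, Finset.insert_eq_self.2 hmem, himg_sum]
    have hdistrib : ∑ q ∈ H, (w (φ q) - w q) = ∑ q ∈ H, w (φ q) - ∑ q ∈ H, w q :=
      Finset.sum_sub_distrib _ _
    have hgt : ∑ q ∈ H, w q < ∑ q ∈ H', w q := by
      rw [hHsum]
      have : (0:ℝ) < ∑ q ∈ H, (w (φ q) - w q) := by
        rw [hsplit, hφvu]
        linarith
      linarith
    exact absurd hmax (not_le.2 hgt)
  · have hsum' : ∑ q ∈ H', w q = w (u, v) + ∑ q ∈ H, w (φ q) := by
      rw [hH'def, Finset.sum_insert hmem, himg_sum]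
    have hkey := key H (subset_refl H)
    have harc2 := (harc (u, v) he).2
    have hdistrib : ∑ q ∈ H, (w (φ q) - w q) = ∑ q ∈ H, w (φ q) - ∑ q ∈ H, w q :=
      Finset.sum_sub_distrib _ _
    have hgt : ∑ q ∈ H, w q < ∑ q ∈ H', w q := by
      rw [hsum']
      linarith
    exact absurd hmax (not_le.2 hgt)

lemma unc_card {V : Type*} [Fintype V] [DecidableEq V] [LinearOrder V]
    (A : Finset (V × V))
    (hirr : ∀ v : V, (v, v) ∉ A)
    (hone : ∀ u v : V, (u, v) ∈ A → (v, u) ∉ A) :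
    ((Finset.univ.offDiag.filter
        (fun p : V × V => p.1 < p.2 ∧ p ∉ A ∧ p.swap ∉ A)).card : ℝ)
      = ((Fintype.card V : ℝ) * ((Fintype.card V : ℝ) - 1)) / 2 - A.card := by
  classical
  have hAne : ∀ e ∈ A, e.1 ≠ e.2 := by
    intro e he h
    have : e = (e.2, e.2) := by rw [Prod.ext_iff]; exact ⟨h, rfl⟩
    rw [this] at he
    exact hirr e.2 he
  -- Lt.card * 2 = n^2 - n
  have hcard2 : (Finset.univ.offDiag.filter (fun p : V × V => p.1 < p.2)).card * 2
      = Fintype.card V * Fintype.card V - Fintype.card V := by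
    have hsplit := Finset.card_filter_add_card_filter_not
      (s := (Finset.univ : Finset V).offDiag) (fun p : V × V => p.1 < p.2)
    have hbij : (Finset.univ.offDiag.filter (fun p : V × V => p.1 < p.2)).card
        = (Finset.univ.offDiag.filter (fun p : V × V => ¬ p.1 < p.2)).card := by
      refine Finset.card_bij (fun p _ => p.swap) ?_ ?_ ?_
      · intro p hp
        obtain ⟨hp1, hp2⟩ := Finset.mem_filter.1 hp
        have hne := (Finset.mem_offDiag.1 hp1).2.2
        exact Finset.mem_filter.2 ⟨Finset.mem_offDiag.2 ⟨Finset.mem_univ _, Finset.mem_univ _,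
          hne.symm⟩, not_lt.2 (le_of_lt hp2)⟩
      · intro p₁ _ p₂ _ h
        exact Prod.swap_injective h
      · intro q hq
        obtain ⟨hq1, hq2⟩ := Finset.mem_filter.1 hq
        have hne := (Finset.mem_offDiag.1 hq1).2.2
        refine ⟨q.swap, Finset.mem_filter.2 ⟨Finset.mem_offDiag.2 ⟨Finset.mem_univ _,
          Finset.mem_univ _, hne.symm⟩, ?_⟩, Prod.swap_swap q⟩
        exact hne.lt_or_gt.resolve_left hq2
    have hoff : (Finset.univ : Finset V).offDiag.card
        = Fintype.card V * Fintype.card V - Fintype.card V := by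
      rw [Finset.offDiag_card, Finset.card_univ]
    omega
  -- connected canonical pairs are in bijection with A
  have hcon : ((Finset.univ.offDiag.filter (fun p : V × V => p.1 < p.2)).filter
      (fun p : V × V => ¬(p ∉ A ∧ p.swap ∉ A))).card = A.card := by
    symm
    refine Finset.card_bij (fun e _ => if e.1 < e.2 then e else e.swap) ?_ ?_ ?_
    · intro e he
      have hne := hAne e he
      by_cases h : e.1 < e.2
      · rw [if_pos h]
        refine Finset.mem_filter.2 ⟨Finset.mem_filter.2 ⟨Finset.mem_offDiag.2
          ⟨Finset.mem_univ _, Finset.mem_univ _, hne⟩, h⟩, ?_⟩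
        intro hcon'
        exact hcon'.1 he
      · rw [if_neg h]
        refine Finset.mem_filter.2 ⟨Finset.mem_filter.2 ⟨Finset.mem_offDiag.2
          ⟨Finset.mem_univ _, Finset.mem_univ _, hne.symm⟩, hne.lt_or_gt.resolve_left h⟩, ?_⟩
        intro hcon'
        rw [Prod.swap_swap] at hcon'
        exact hcon'.2 he
    · intro e₁ h₁ e₂ h₂ heq
      by_cases c₁ : e₁.1 < e₁.2 <;> by_cases c₂ : e₂.1 < e₂.2
      · rwa [if_pos c₁, if_pos c₂] at heq
      · rw [if_pos c₁, if_neg c₂] at heq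
        exfalso
        have : e₂.swap ∈ A := heq ▸ h₁
        have h2 : (e₂.2, e₂.1) ∈ A := by rwa [Prod.swap] at this
        exact hone e₂.2 e₂.1 h2 (by rw [Prod.mk.eta]; exact h₂)
      · rw [if_neg c₁, if_pos c₂] at heq
        exfalso
        have : e₁.swap ∈ A := by rw [heq]; exact h₂
        have h2 : (e₁.2, e₁.1) ∈ A := by rwa [Prod.swap] at this
        exact hone e₁.2 e₁.1 h2 (by rw [Prod.mk.eta]; exact h₁)
      · rw [if_neg c₁, if_neg c₂] at heq
        exact Prod.swap_injective heq
    · intro p hp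
      obtain ⟨hp1, hp2⟩ := Finset.mem_filter.1 hp
      obtain ⟨hpo, hplt⟩ := Finset.mem_filter.1 hp1
      rw [not_and_or, not_not, not_not] at hp2
      rcases hp2 with h | h
      · exact ⟨p, h, by rw [if_pos hplt]⟩
      · refine ⟨p.swap, h, ?_⟩
        rw [if_neg (by simp only [Prod.fst_swap, Prod.snd_swap]; exact not_lt.2 hplt.le)]
        exact Prod.swap_swap p
  -- unconnected + connected = all canonical
  have hsplit2 : (Finset.univ.offDiag.filter
        (fun p : V × V => p.1 < p.2 ∧ p ∉ A ∧ p.swap ∉ A)).card + A.card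
      = (Finset.univ.offDiag.filter (fun p : V × V => p.1 < p.2)).card := by
    rw [← hcon]
    rw [show Finset.univ.offDiag.filter (fun p : V × V => p.1 < p.2 ∧ p ∉ A ∧ p.swap ∉ A)
      = (Finset.univ.offDiag.filter (fun p : V × V => p.1 < p.2)).filter
          (fun p : V × V => p ∉ A ∧ p.swap ∉ A) from by rw [Finset.filter_filter]]
    exact Finset.card_filter_add_card_filter_not _
  -- A.card ≤ Lt.card
  have hle : Fintype.card V ≤ Fintype.card V * Fintype.card V := by
    rcases Nat.eq_zero_or_pos (Fintype.card V) with h | h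
    · rw [h]
    · exact Nat.le_mul_of_pos_left _ h
  -- conclude over ℝ
  have key : 2 * ((Finset.univ.offDiag.filter
      (fun p : V × V => p.1 < p.2 ∧ p ∉ A ∧ p.swap ∉ A)).card + A.card)
      = Fintype.card V * Fintype.card V - Fintype.card V := by rw [hsplit2]; omega
  have : (2:ℝ) * ((Finset.univ.offDiag.filter
      (fun p : V × V => p.1 < p.2 ∧ p ∉ A ∧ p.swap ∉ A)).card + A.card)
      = (Fintype.card V : ℝ) * Fintype.card V - Fintype.card V := by
    have := congrArg (fun k : ℕ => (k : ℝ)) key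
    push_cast [Nat.cast_sub hle] at this ⊢
    linarith
  linarith

section ProbAux
variable {Ω : Type*} [MeasurableSpace Ω] {μ : Measure Ω} [IsProbabilityMeasure μ]

lemma fun_ite_eq (S : Set Ω) [DecidablePred (· ∈ S)] (a b : ℝ) :
    (fun ω => if ω ∈ S then a else b) = fun ω => S.indicator (fun _ => a - b) ω + b := by
  funext ω; by_cases h : ω ∈ S <;> simp [h]

lemma integrable_ite {S : Set Ω} (hS : MeasurableSet S) [DecidablePred (· ∈ S)] (a b : ℝ) :
    Integrable (fun ω => if ω ∈ S then a else b) μ := by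
  rw [fun_ite_eq]
  exact ((integrable_indicator_iff hS).2 (integrableOn_const (measure_ne_top μ S))).add
    (integrable_const b)

lemma integral_ite {S : Set Ω} (hS : MeasurableSet S) [DecidablePred (· ∈ S)] (a b : ℝ) :
    ∫ ω, (if ω ∈ S then a else b) ∂μ = (a - b) * (μ S).toReal + b := by
  rw [fun_ite_eq]
  rw [integral_add ((integrable_indicator_iff hS).2
    (integrableOn_const (measure_ne_top μ S))) (integrable_const b)]
  rw [integral_indicator_const _ hS]
  simp [smul_eq_mul, mul_comm, measureReal_def]

lemma integral_ite₂ {S₁ S₂ : Set Ω} (hS₁ : MeasurableSet S₁) (hS₂ : MeasurableSet S₂)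
    [DecidablePred (· ∈ S₁)] [DecidablePred (· ∈ S₂)]
    (hdis : ∀ ω, ¬(ω ∈ S₁ ∧ ω ∈ S₂)) (a b c : ℝ) :
    ∫ ω, (if ω ∈ S₁ then a else if ω ∈ S₂ then b else c) ∂μ
      = (a - c) * (μ S₁).toReal + (b - c) * (μ S₂).toReal + c := by
  have heq : (fun ω => if ω ∈ S₁ then a else if ω ∈ S₂ then b else c)
      = fun ω => S₁.indicator (fun _ => a - c) ω + (S₂.indicator (fun _ => b - c) ω + c) := by
    funext ω
    by_cases h1 : ω ∈ S₁
    · have h2 : ω ∉ S₂ := fun h2 => hdis ω ⟨h1, h2⟩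
      simp [h1, h2]
    · by_cases h2 : ω ∈ S₂ <;> simp [h1, h2]
  have i1 : Integrable (fun ω => S₁.indicator (fun _ => a - c) ω) μ :=
    (integrable_indicator_iff hS₁).2 (integrableOn_const (measure_ne_top μ S₁))
  have i2 : Integrable (fun ω => S₂.indicator (fun _ => b - c) ω) μ :=
    (integrable_indicator_iff hS₂).2 (integrableOn_const (measure_ne_top μ S₂))
  have i3 : Integrable (fun ω => S₂.indicator (fun _ => b - c) ω + c) μ :=
    i2.add (integrable_const c)
  rw [heq]
  rw [integral_add i1 i3]
  rw [integral_add i2 (integrable_const c)]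
  rw [integral_indicator_const _ hS₁, integral_indicator_const _ hS₂]
  simp [smul_eq_mul, mul_comm, measureReal_def]
  ring

lemma integrable_ite₂ {S₁ S₂ : Set Ω} (hS₁ : MeasurableSet S₁) (hS₂ : MeasurableSet S₂)
    [DecidablePred (· ∈ S₁)] [DecidablePred (· ∈ S₂)] (a b c : ℝ) :
    Integrable (fun ω => if ω ∈ S₁ then a else if ω ∈ S₂ then b else c) μ := by
  have : Integrable (fun ω => if ω ∈ S₁ then a else ((fun ω' => if ω' ∈ S₂ then b else c) ω)) μ := by
    rw [show (fun ω => if ω ∈ S₁ then a else ((fun ω' => if ω' ∈ S₂ then b else c) ω))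
        = fun ω => S₁.indicator (fun _ => a) ω + (Set.indicator S₁ᶜ (fun ω' => if ω' ∈ S₂ then b else c)) ω from ?_]
    · exact ((integrable_indicator_iff hS₁).2 (integrableOn_const (measure_ne_top μ S₁))).add
        ((integrable_indicator_iff hS₁.compl).2 ((integrable_ite hS₂ b c).integrableOn))
    · funext ω; by_cases h : ω ∈ S₁ <;> simp [h, Set.indicator]
  exact this

lemma chernoff_upper {N : ℕ} {X : Fin N → Ω → ℝ}
    (hind : iIndepFun X μ) (hmeas : ∀ i, Measurable (X i))
    {t b : ℝ} (ht : 0 ≤ t)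
    (hint : ∀ i, Integrable (fun ω => exp (t * X i ω)) μ)
    (hb : ∀ i, mgf (X i) μ t ≤ exp b) (a : ℝ) :
    (μ {ω | a ≤ ∑ i, X i ω}).toReal ≤ exp (-t * a + N * b) := by
  have hInt : Integrable (fun ω => exp (t * (∑ i, X i) ω)) μ :=
    hind.integrable_exp_mul_sum hmeas (fun i _ => hint i)
  have h1 : (μ {ω | a ≤ (∑ i, X i) ω}).toReal ≤ exp (-t * a) * mgf (∑ i, X i) μ t :=
    measure_ge_le_exp_mul_mgf a ht hInt
  have h2 : mgf (∑ i, X i) μ t = ∏ i, mgf (X i) μ t := hind.mgf_sum hmeas Finset.univ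
  have h3 : ∏ i : Fin N, mgf (X i) μ t ≤ exp b ^ N := by
    calc ∏ i : Fin N, mgf (X i) μ t ≤ ∏ _i : Fin N, exp b :=
          Finset.prod_le_prod (fun i _ => mgf_nonneg) (fun i _ => hb i)
      _ = exp b ^ N := by simp
  have h4 : {ω | a ≤ ∑ i, X i ω} = {ω | a ≤ (∑ i, X i) ω} := by
    simp [Finset.sum_apply]
  rw [h4]
  calc (μ {ω | a ≤ (∑ i, X i) ω}).toReal ≤ exp (-t * a) * mgf (∑ i, X i) μ t := h1
    _ ≤ exp (-t * a) * exp b ^ N := by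
        rw [h2]; exact mul_le_mul_of_nonneg_left h3 (exp_pos _).le
    _ = exp (-t * a + N * b) := by
        rw [← Real.exp_nat_mul, ← Real.exp_add]

lemma chernoff_lower {N : ℕ} {X : Fin N → Ω → ℝ}
    (hind : iIndepFun X μ) (hmeas : ∀ i, Measurable (X i))
    {t b : ℝ} (ht : t ≤ 0)
    (hint : ∀ i, Integrable (fun ω => exp (t * X i ω)) μ)
    (hb : ∀ i, mgf (X i) μ t ≤ exp b) (a : ℝ) :
    (μ {ω | ∑ i, X i ω ≤ a}).toReal ≤ exp (-t * a + N * b) := by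
  have hInt : Integrable (fun ω => exp (t * (∑ i, X i) ω)) μ :=
    hind.integrable_exp_mul_sum hmeas (fun i _ => hint i)
  have h1 : (μ {ω | (∑ i, X i) ω ≤ a}).toReal ≤ exp (-t * a) * mgf (∑ i, X i) μ t :=
    measure_le_le_exp_mul_mgf a ht hInt
  have h2 : mgf (∑ i, X i) μ t = ∏ i, mgf (X i) μ t := hind.mgf_sum hmeas Finset.univ
  have h3 : ∏ i : Fin N, mgf (X i) μ t ≤ exp b ^ N := by
    calc ∏ i : Fin N, mgf (X i) μ t ≤ ∏ _i : Fin N, exp b :=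
          Finset.prod_le_prod (fun i _ => mgf_nonneg) (fun i _ => hb i)
      _ = exp b ^ N := by simp
  have h4 : {ω | ∑ i, X i ω ≤ a} = {ω | (∑ i, X i) ω ≤ a} := by
    simp [Finset.sum_apply]
  rw [h4]
  calc (μ {ω | (∑ i, X i) ω ≤ a}).toReal ≤ exp (-t * a) * mgf (∑ i, X i) μ t := h1
    _ ≤ exp (-t * a) * exp b ^ N := by
        rw [h2]; exact mul_le_mul_of_nonneg_left h3 (exp_pos _).le
    _ = exp (-t * a + N * b) := by
        rw [← Real.exp_nat_mul, ← Real.exp_add]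

lemma arc_tail (N : ℕ) (ε : ℝ) (hε : 0 < ε) (hε2 : ε ≤ 1/2)
    (T : Fin N → Ω → Bool) (hmeas : ∀ i, Measurable (T i))
    (hdist : ∀ i, μ {ω | T i ω = true} = ENNReal.ofReal (1/2 + ε))
    (hind : iIndepFun
      (fun i (ω : Ω) => if T i ω then (1:ℝ) else 0) μ) :
    (μ {ω | ∑ i, (if T i ω then (1:ℝ) else 0) ≤ N * (1/2 + (3/8)*ε)}).toReal
      ≤ Real.exp (-(N * ε^2) / 2) := by
  classical
  set p : ℝ := 1/2 + ε with hp
  set v : ℝ := p * (1 - p) with hv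
  set t₁ : ℝ := (5/8) * ε with ht₁
  have hp0 : 0 ≤ p := by rw [hp]; linarith
  have hp1 : p ≤ 1 := by rw [hp]; linarith
  have hv0 : 0 ≤ v := mul_nonneg hp0 (by linarith)
  have ht₁0 : 0 < t₁ := by rw [ht₁]; linarith
  set l : ℝ := if (3/2) * v ≤ t₁ then (1:ℝ) else t₁ / ((3/2) * v) with hl
  have hl_pos : 0 < l := by
    rw [hl]; split_ifs with h
    · norm_num
    · push_neg at h
      have hv' : 0 < v := by nlinarith
      exact div_pos ht₁0 (by linarith)
  have hl_le1 : l ≤ 1 := by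
    rw [hl]; split_ifs with h
    · exact le_refl 1
    · push_neg at h
      have hv' : 0 < v := by nlinarith
      rw [div_le_one (by linarith)]
      linarith
  have hrate : ε^2 / 2 ≤ l * t₁ - (3/4) * l^2 * v := by
    rw [hl]; split_ifs with h
    · have hε2' : ε^2 ≤ (5/8) * ε := by nlinarith
      rw [one_pow, one_mul, mul_one]
      rw [ht₁] at h ⊢
      linarith
    · push_neg at h
      have hv' : 0 < v := by nlinarith
      have hval : t₁ / ((3/2) * v) * t₁ - (3/4) * (t₁ / ((3/2) * v))^2 * v = t₁^2 / (3 * v) := by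
        field_simp
        ring
      rw [hval, le_div_iff₀ (by linarith : (0:ℝ) < 3 * v)]
      have hveq : v = 1/4 - ε^2 := by rw [hv, hp]; ring
      rw [hveq, ht₁]
      nlinarith
  have hXmeas : ∀ i, Measurable (fun ω => if T i ω then (1:ℝ) else 0) := fun i =>
    (measurable_of_countable (fun b : Bool => if b then (1:ℝ) else 0)).comp (hmeas i)
  have hSmeas : ∀ i, MeasurableSet {ω | T i ω = true} := fun i =>
    (hmeas i) (MeasurableSet.singleton true)
  have hfun : ∀ i, (fun ω => exp ((-l) * (if T i ω then (1:ℝ) else 0)))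
      = fun ω => if ω ∈ {ω | T i ω = true} then exp (-l) else 1 := by
    intro i
    funext ω
    by_cases h : T i ω = true <;> simp [h]
  have hptoReal : ∀ i, (μ {ω | T i ω = true}).toReal = p := by
    intro i
    rw [hdist i, ENNReal.toReal_ofReal hp0]
  have hint : ∀ i, Integrable (fun ω => exp ((-l) * (if T i ω then (1:ℝ) else 0))) μ := by
    intro i
    rw [hfun i]
    exact integrable_ite (hSmeas i) _ _
  have hmgf : ∀ i, mgf (fun ω => if T i ω then (1:ℝ) else 0) μ (-l)
      ≤ exp (-l * p + (3/4) * l^2 * v) := by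
    intro i
    have hcalc : mgf (fun ω => if T i ω then (1:ℝ) else 0) μ (-l)
        = (exp (-l) - 1) * p + 1 := by
      unfold mgf
      rw [hfun i, integral_ite (hSmeas i), hptoReal i]
    rw [hcalc]
    have hlp1 : l * p ≤ 1 := by nlinarith
    have h1 : exp (l * p) ≤ 1 + l * p + (3/4) * (l * p)^2 := exp_le_quad hlp1
    have h2 : exp (-(l * (1 - p))) ≤ 1 + (-(l * (1 - p))) + (3/4) * (-(l * (1 - p)))^2 :=
      exp_le_quad (by nlinarith)
    have hkey : (1 - p) * exp (l * p) + p * exp (-(l * (1 - p)))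
        ≤ 1 + (3/4) * l^2 * (p * (1 - p)) := by
      nlinarith [mul_le_mul_of_nonneg_left h1 (by linarith : (0:ℝ) ≤ 1 - p),
        mul_le_mul_of_nonneg_left h2 hp0]
    rw [← hv] at hkey
    have e1 : exp (-(l * p)) * exp (l * p) = 1 := by rw [← Real.exp_add]; simp
    have e2 : exp (-(l * p)) * exp (-(l * (1 - p))) = exp (-l) := by
      rw [← Real.exp_add]; congr 1; ring
    have hsplit : (exp (-l) - 1) * p + 1
        = exp (-(l * p)) * ((1 - p) * exp (l * p) + p * exp (-(l * (1 - p)))) := by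
      have hexpand : exp (-(l * p)) * ((1 - p) * exp (l * p) + p * exp (-(l * (1 - p))))
          = (1 - p) * (exp (-(l * p)) * exp (l * p))
            + p * (exp (-(l * p)) * exp (-(l * (1 - p)))) := by ring
      rw [hexpand, e1, e2]
      ring
    calc (exp (-l) - 1) * p + 1
        = exp (-(l * p)) * ((1 - p) * exp (l * p) + p * exp (-(l * (1 - p)))) := hsplit
      _ ≤ exp (-(l * p)) * (1 + (3/4) * l^2 * v) :=
          mul_le_mul_of_nonneg_left hkey (exp_pos _).le
      _ ≤ exp (-(l * p)) * exp ((3/4) * l^2 * v) := by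
          refine mul_le_mul_of_nonneg_left ?_ (exp_pos _).le
          have := Real.add_one_le_exp ((3/4) * l^2 * v)
          linarith
      _ = exp (-l * p + (3/4) * l^2 * v) := by rw [← Real.exp_add]; congr 1; ring
  have hcher := chernoff_lower hind hXmeas (t := -l) (b := -l * p + (3/4) * l^2 * v)
    (by linarith) hint hmgf ((N:ℝ) * (1/2 + (3/8)*ε))
  refine hcher.trans (Real.exp_le_exp.2 ?_)
  have hNc : (0:ℝ) ≤ (N:ℝ) := Nat.cast_nonneg N
  have hmul := mul_le_mul_of_nonneg_left hrate hNc
  have hexpand : -(-l) * ((N:ℝ) * (1/2 + (3/8)*ε)) + (N:ℝ) * (-l * p + (3/4) * l^2 * v)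
      = -((N:ℝ) * (l * t₁ - (3/4) * l^2 * v)) := by
    rw [hp, ht₁]; ring
  rw [hexpand]
  have : -((N:ℝ) * ε^2) / 2 = -((N:ℝ) * (ε^2/2)) := by ring
  rw [this]
  linarith

lemma pair_tail (N : ℕ) (ε : ℝ) (hε : 0 < ε) (δ₂ : ℝ) (hδ₂ : 0 ≤ δ₂) (σ : ℝ) (hσ : 1 ≤ σ)
    (T₁ T₂ : Fin N → Ω → Bool) (hm₁ : ∀ i, Measurable (T₁ i)) (hm₂ : ∀ i, Measurable (T₂ i))
    (hdis : ∀ i ω, ¬(T₁ i ω = true ∧ T₂ i ω = true))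
    (hd₁ : ∀ i, μ {ω | T₁ i ω = true} = ENNReal.ofReal (δ₂/2))
    (hd₂ : ∀ i, μ {ω | T₂ i ω = true} = ENNReal.ofReal (δ₂/2))
    (hind : iIndepFun
      (fun i (ω : Ω) => (if T₁ i ω then (1:ℝ) else 0) - (if T₂ i ω then (1:ℝ) else 0)) μ) :
    (μ {ω | (N:ℝ) * ((3/4)*ε/σ)
        ≤ ∑ i, ((if T₁ i ω then (1:ℝ) else 0) - (if T₂ i ω then (1:ℝ) else 0))}).toReal
      ≤ Real.exp (-(N * ε^2) / (6*σ^2*δ₂ + 2*σ*ε)) := by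
  classical
  have hσ0 : 0 < σ := lt_of_lt_of_le one_pos hσ
  set s : ℝ := (3/4)*ε/σ with hs
  have hs0 : 0 < s := by rw [hs]; positivity
  set d : ℝ := (3/2)*δ₂ + s with hd
  have hd0 : 0 < d := by rw [hd]; positivity
  set l : ℝ := s / d with hl
  have hl_pos : 0 < l := div_pos hs0 hd0
  have hl_le1 : l ≤ 1 := by
    rw [hl, div_le_one hd0, hd]; linarith
  have hq0 : 0 ≤ δ₂/2 := by linarith
  have hYmeas : ∀ i, Measurable (fun ω =>
      (if T₁ i ω then (1:ℝ) else 0) - (if T₂ i ω then (1:ℝ) else 0)) := by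
    intro i
    have h1 : Measurable (fun ω => if T₁ i ω then (1:ℝ) else 0) :=
      (measurable_of_countable (fun b : Bool => if b then (1:ℝ) else 0)).comp (hm₁ i)
    have h2 : Measurable (fun ω => if T₂ i ω then (1:ℝ) else 0) :=
      (measurable_of_countable (fun b : Bool => if b then (1:ℝ) else 0)).comp (hm₂ i)
    exact h1.sub h2
  have hS₁ : ∀ i, MeasurableSet {ω | T₁ i ω = true} := fun i =>
    (hm₁ i) (MeasurableSet.singleton true)
  have hS₂ : ∀ i, MeasurableSet {ω | T₂ i ω = true} := fun i =>
    (hm₂ i) (MeasurableSet.singleton true)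
  have hfun : ∀ i, (fun ω => exp (l * ((if T₁ i ω then (1:ℝ) else 0)
        - (if T₂ i ω then (1:ℝ) else 0))))
      = fun ω => if ω ∈ {ω | T₁ i ω = true} then exp l
          else if ω ∈ {ω | T₂ i ω = true} then exp (-l) else 1 := by
    intro i
    funext ω
    by_cases h1 : T₁ i ω = true
    · have h2 : ¬ T₂ i ω = true := fun h2 => hdis i ω ⟨h1, h2⟩
      simp [h1, h2]
    · by_cases h2 : T₂ i ω = true
      · simp [h1, h2]
      · simp [h1, h2]
  have hq₁ : ∀ i, (μ {ω | T₁ i ω = true}).toReal = δ₂/2 := by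
    intro i; rw [hd₁ i, ENNReal.toReal_ofReal hq0]
  have hq₂ : ∀ i, (μ {ω | T₂ i ω = true}).toReal = δ₂/2 := by
    intro i; rw [hd₂ i, ENNReal.toReal_ofReal hq0]
  have hint : ∀ i, Integrable (fun ω => exp (l * ((if T₁ i ω then (1:ℝ) else 0)
      - (if T₂ i ω then (1:ℝ) else 0)))) μ := by
    intro i
    rw [hfun i]
    exact integrable_ite₂ (hS₁ i) (hS₂ i) _ _ _
  have hmgf : ∀ i, mgf (fun ω => (if T₁ i ω then (1:ℝ) else 0)
      - (if T₂ i ω then (1:ℝ) else 0)) μ l ≤ exp ((3/4) * δ₂ * l^2) := by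
    intro i
    have hcalc : mgf (fun ω => (if T₁ i ω then (1:ℝ) else 0)
        - (if T₂ i ω then (1:ℝ) else 0)) μ l
        = (exp l - 1) * (δ₂/2) + (exp (-l) - 1) * (δ₂/2) + 1 := by
      unfold mgf
      rw [hfun i, integral_ite₂ (hS₁ i) (hS₂ i) (fun ω => hdis i ω), hq₁ i, hq₂ i]
    rw [hcalc]
    have h1 : exp l ≤ 1 + l + (3/4) * l^2 := exp_le_quad hl_le1
    have h2 : exp (-l) ≤ 1 + (-l) + (3/4) * (-l)^2 := exp_le_quad (by linarith)
    have hkey : (exp l - 1) * (δ₂/2) + (exp (-l) - 1) * (δ₂/2) + 1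
        ≤ 1 + (3/4) * δ₂ * l^2 := by nlinarith
    have := Real.add_one_le_exp ((3/4) * δ₂ * l^2)
    linarith
  have hcher := chernoff_upper hind hYmeas (t := l) (b := (3/4) * δ₂ * l^2)
    hl_pos.le hint hmgf ((N:ℝ) * s)
  refine hcher.trans (Real.exp_le_exp.2 ?_)
  have hNc : (0:ℝ) ≤ (N:ℝ) := Nat.cast_nonneg N
  have hD0 : 0 < 6*σ^2*δ₂ + 2*σ*ε := by positivity
  have hrate : ε^2 / (6*σ^2*δ₂ + 2*σ*ε) ≤ l * s - (3/4) * δ₂ * l^2 := by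
    have hid : l * s - (3/4) * δ₂ * l^2 = s^2 * ((3/4)*δ₂ + s) / d^2 := by
      rw [hl]
      field_simp
      ring
    rw [hid, div_le_div_iff₀ hD0 (by positivity)]
    have hσne : σ ≠ 0 := ne_of_gt hσ0
    have hx : 0 ≤ σ * δ₂ := mul_nonneg hσ0.le hδ₂
    have key : 2*(2*(σ*δ₂)+ε)^2 ≤ 3*((σ*δ₂)+ε)*(3*(σ*δ₂)+ε) := by nlinarith [sq_nonneg (σ*δ₂ - ε)]
    have e1 : ε^2 * d^2 * (16*σ^2) = 9 * ε^2 * (2*(σ*δ₂)+ε)^2 := by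
      rw [hd, hs]; field_simp; ring
    have e2 : s^2*((3/4)*δ₂+s)*(6*σ^2*δ₂+2*σ*ε) * (16*σ^2)
        = (27/2) * ε^2 * ((σ*δ₂)+ε)*(3*(σ*δ₂)+ε) := by
      rw [hs]; field_simp; ring
    have hpos : (0:ℝ) < 16*σ^2 := by positivity
    rw [← mul_le_mul_iff_of_pos_right hpos, e1, e2]
    nlinarith [mul_le_mul_of_nonneg_left key (by positivity : (0:ℝ) ≤ (9/2)*ε^2)]
  have hexpand : -l * ((N:ℝ) * s) + (N:ℝ) * ((3/4) * δ₂ * l^2)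
      = -((N:ℝ) * (l * s - (3/4) * δ₂ * l^2)) := by ring
  rw [hexpand]
  have h2 : -((N:ℝ) * ε^2) / (6*σ^2*δ₂ + 2*σ*ε)
      = -((N:ℝ) * (ε^2 / (6*σ^2*δ₂ + 2*σ*ε))) := by ring
  rw [h2]
  have := mul_le_mul_of_nonneg_left hrate hNc
  linarith

lemma final_wrap {Ω : Type*} [MeasurableSpace Ω] {μ : Measure Ω} [IsProbabilityMeasure μ]
    (G T : Set Ω) (hGT : G ⊆ T) {x y : ℝ} (hy : 0 ≤ y)
    (hGc : μ Gᶜ ≤ ENNReal.ofReal y) (hsum : x + y ≤ 1) :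
    ENNReal.ofReal x ≤ μ T := by
  rcases le_or_gt x 0 with hx | hx
  · rw [ENNReal.ofReal_of_nonpos hx]; exact zero_le
  · have h1 : ENNReal.ofReal x + μ Gᶜ ≤ 1 := by
      calc ENNReal.ofReal x + μ Gᶜ ≤ ENNReal.ofReal x + ENNReal.ofReal y :=
            add_le_add_right hGc _
        _ = ENNReal.ofReal (x + y) := (ENNReal.ofReal_add hx.le hy).symm
        _ ≤ 1 := ENNReal.ofReal_le_one.2 hsum
    have h2 : (1:ENNReal) ≤ μ G + μ Gᶜ := by
      calc (1:ENNReal) = μ (G ∪ Gᶜ) := by rw [Set.union_compl_self, measure_univ]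
        _ ≤ μ G + μ Gᶜ := measure_union_le _ _
    have h3 : ENNReal.ofReal x ≤ μ G :=
      (ENNReal.add_le_add_iff_right (measure_ne_top μ Gᶜ)).1 (h1.trans h2)
    exact h3.trans (measure_mono hGT)

end ProbAux
end AuxLemmas

/-- Let `G₁, …, G_N` be i.i.d. random perturbations of a ground truth
DAG `G = (V, A)` with flip probability `δ₁ = 0.5 − ε` (`ε > 0`) on true arcs and
spurious-edge probability `δ₂` on unconnected pairs.  Let `Ĝ` be the ensemble graph
whose weight on each arc is the fraction of the `N` sample graphs containing it.
Then with probability at least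
`1 − 2|A| exp(−Nε²/2) − 2U exp(−Nε²/(6U²δ₂ + 2Uε))`, where
`U = |V|(|V|−1)/2 − |A|` is the number of unconnected pairs of `G`, every arc of `G`
belongs to the maximum-weight acyclic subgraph `MAS(Ĝ)`. -/
theorem ensemble_denoise_recovers_dag
    {V : Type*} [Fintype V] [DecidableEq V] [LinearOrder V]
    {Ω : Type*} [MeasurableSpace Ω] (μ : Measure Ω) [IsProbabilityMeasure μ]
    (A : Finset (V × V))
    -- ground truth is a DAG with no self-loops and at most one arc per pair
    (hacyc : Acyclic (fun a b => (a, b) ∈ A))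
    (hirr : ∀ v : V, (v, v) ∉ A)
    (hone : ∀ u v : V, (u, v) ∈ A → (v, u) ∉ A)
    (N : ℕ) (hN : 0 < N)
    (ε : ℝ) (hε : 0 < ε) (δ₁ : ℝ) (hδ₁ : δ₁ = 0.5 - ε)
    (δ₂ : ℝ) (hδ₂ : δ₂ ∈ Set.Icc (0 : ℝ) 1)
    -- `R i ω p = true` iff the arc `p` is present in the `i`-th sample graph
    (R : Fin N → Ω → V × V → Bool)
    (hmeas : ∀ i p, Measurable (fun ω => R i ω p))
    (hnoself : ∀ i ω v, R i ω (v, v) = false)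
    -- each true arc is either kept or flipped (exactly one direction present)
    (hflip : ∀ i ω u v, (u, v) ∈ A → (R i ω (u, v) = !R i ω (v, u)))
    (hflipdist : ∀ i u v, (u, v) ∈ A →
      μ {ω | R i ω (u, v) = true} = ENNReal.ofReal (1 - δ₁))
    -- unconnected pairs: never both directions; each direction w.p. δ₂/2
    (huncone : ∀ i ω u v, u ≠ v → (u, v) ∉ A → (v, u) ∉ A →
      ¬ (R i ω (u, v) = true ∧ R i ω (v, u) = true))
    (huncdist : ∀ i u v, u ≠ v → (u, v) ∉ A → (v, u) ∉ A →
      μ {ω | R i ω (u, v) = true} = ENNReal.ofReal (δ₂ / 2))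
    -- independence across sample graphs and across (unordered) vertex pairs
    (hind : iIndepFun
      (fun x : Fin N × {p : V × V // p.1 < p.2} => fun ω =>
        (R x.1 ω x.2.1, R x.1 ω (x.2.1.2, x.2.1.1))) μ) :
    ENNReal.ofReal
        (1 - 2 * A.card * Real.exp (-(N * ε ^ 2) / 2) -
          2 * ((Fintype.card V * (Fintype.card V - 1) : ℝ) / 2 - A.card) *
            Real.exp (-(N * ε ^ 2) /
              (6 * ((Fintype.card V * (Fintype.card V - 1) : ℝ) / 2 - A.card) ^ 2 * δ₂ +
                2 * ((Fintype.card V * (Fintype.card V - 1) : ℝ) / 2 - A.card) * ε))) ≤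
      μ {ω | ∀ H : Finset (V × V),
        IsMaxAcyclicSubgraph
          (fun p => (N : ℝ)⁻¹ * ∑ i, (if R i ω p then (1 : ℝ) else 0)) H →
        ∀ e ∈ A, e ∈ H} := by


  classical
  have hAne : ∀ e ∈ A, e.1 ≠ e.2 := by
    intro e he h
    have : e = (e.2, e.2) := by rw [Prod.ext_iff]; exact ⟨h, rfl⟩
    rw [this] at he
    exact hirr e.2 he
  have hUcard := unc_card A hirr hone
  have hUnn : (0:ℝ) ≤ (Fintype.card V : ℝ) * ((Fintype.card V : ℝ) - 1) / 2 - A.card := by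
    rw [← hUcard]
    positivity
  -- rewrite goal in terms of the cardinality of unconnected canonical pairs
  rw [show ((Fintype.card V : ℝ) * ((Fintype.card V : ℝ) - 1)) / 2 - (A.card : ℝ)
      = ((Finset.univ.offDiag.filter
        (fun p : V × V => p.1 < p.2 ∧ p ∉ A ∧ p.swap ∉ A)).card : ℝ) from hUcard.symm]
  by_cases hA0 : A = ∅
  · have hTuniv : {ω : Ω | ∀ H : Finset (V × V),
        IsMaxAcyclicSubgraph
          (fun p => (N : ℝ)⁻¹ * ∑ i, (if R i ω p then (1 : ℝ) else 0)) H →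
        ∀ e ∈ A, e ∈ H} = Set.univ := by
      ext ω; simp [hA0]
    rw [hTuniv, measure_univ]
    refine ENNReal.ofReal_le_one.2 ?_
    have h1 : (A.card : ℝ) = 0 := by rw [hA0]; simp
    rw [h1]
    have h2 := mul_nonneg (Nat.cast_nonneg (α := ℝ) (Finset.univ.offDiag.filter
        (fun p : V × V => p.1 < p.2 ∧ p ∉ A ∧ p.swap ∉ A)).card)
      (Real.exp_pos (-(N * ε ^ 2) /
        (6 * ((Finset.univ.offDiag.filter
          (fun p : V × V => p.1 < p.2 ∧ p ∉ A ∧ p.swap ∉ A)).card : ℝ) ^ 2 * δ₂ +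
          2 * ((Finset.univ.offDiag.filter
          (fun p : V × V => p.1 < p.2 ∧ p ∉ A ∧ p.swap ∉ A)).card : ℝ) * ε))).le
    have h3 := (Real.exp_pos (-(N * ε ^ 2) / 2)).le
    linarith
  obtain ⟨e₀, he₀⟩ : A.Nonempty := Finset.nonempty_iff_ne_empty.2 hA0
  have hε2 : ε ≤ 1/2 := by
    have hd := hflipdist ⟨0, hN⟩ e₀.1 e₀.2 (by rwa [Prod.mk.eta])
    have hle : μ {ω | R ⟨0, hN⟩ ω (e₀.1, e₀.2) = true} ≤ 1 := prob_le_one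
    rw [hd, ENNReal.ofReal_le_one, hδ₁] at hle
    norm_num at hle
    linarith
  have hδ₂0 : 0 ≤ δ₂ := hδ₂.1
  have hNr : (0:ℝ) < N := by exact_mod_cast hN
  -- independence of per-arc families
  have hfamA : ∀ e ∈ A, iIndepFun
      (fun i (ω : Ω) => if R i ω e then (1:ℝ) else 0) μ := by
    intro e he
    rcases (hAne e he).lt_or_gt with hlt | hlt
    · exact (iIndepFun_comp_right hind
        (g := fun i : Fin N => (i, (⟨e, hlt⟩ : {p : V × V // p.1 < p.2})))
        (fun a b h => (Prod.ext_iff.1 h).1)).comp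
        (fun _ => (fun bb : Bool × Bool => if bb.1 then (1:ℝ) else 0))
        (fun _ => measurable_of_countable _)
    · exact (iIndepFun_comp_right hind
        (g := fun i : Fin N => (i, (⟨(e.2, e.1), hlt⟩ : {p : V × V // p.1 < p.2})))
        (fun a b h => (Prod.ext_iff.1 h).1)).comp
        (fun _ => (fun bb : Bool × Bool => if bb.2 then (1:ℝ) else 0))
        (fun _ => measurable_of_countable _)
  -- independence of per-pair difference families (both orientations)
  have hfamU : ∀ q : V × V, q.1 < q.2 → iIndepFun
      (fun i (ω : Ω) => (if R i ω q then (1:ℝ) else 0) - (if R i ω q.swap then (1:ℝ) else 0)) μ := by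
    intro q hlt
    exact (iIndepFun_comp_right hind
      (g := fun i : Fin N => (i, (⟨q, hlt⟩ : {p : V × V // p.1 < p.2})))
      (fun a b h => (Prod.ext_iff.1 h).1)).comp
      (fun _ => (fun bb : Bool × Bool =>
        (if bb.1 then (1:ℝ) else 0) - (if bb.2 then (1:ℝ) else 0)))
      (fun _ => measurable_of_countable _)
  have hfamU' : ∀ q : V × V, q.1 < q.2 → iIndepFun
      (fun i (ω : Ω) => (if R i ω q.swap then (1:ℝ) else 0) - (if R i ω q then (1:ℝ) else 0)) μ := by
    intro q hlt
    exact (iIndepFun_comp_right hind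
      (g := fun i : Fin N => (i, (⟨q, hlt⟩ : {p : V × V // p.1 < p.2})))
      (fun a b h => (Prod.ext_iff.1 h).1)).comp
      (fun _ => (fun bb : Bool × Bool =>
        (if bb.2 then (1:ℝ) else 0) - (if bb.1 then (1:ℝ) else 0)))
      (fun _ => measurable_of_countable _)
  -- the good event
  set UncS : Finset (V × V) := Finset.univ.offDiag.filter
      (fun p : V × V => p.1 < p.2 ∧ p ∉ A ∧ p.swap ∉ A) with hUncS
  set sU : ℝ := (3/4)*ε/(UncS.card : ℝ) with hsU
  set G : Set Ω := {ω | (∀ e ∈ A,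
      (N:ℝ)*(1/2 + (3/8)*ε) < ∑ i, (if R i ω e then (1:ℝ) else 0))
      ∧ (∀ q ∈ UncS, |∑ i, ((if R i ω q then (1:ℝ) else 0)
          - (if R i ω q.swap then (1:ℝ) else 0))| ≤ (N:ℝ) * sU)} with hG
  have hGT : G ⊆ {ω : Ω | ∀ H : Finset (V × V),
      IsMaxAcyclicSubgraph
        (fun p => (N : ℝ)⁻¹ * ∑ i, (if R i ω p then (1 : ℝ) else 0)) H →
      ∀ e ∈ A, e ∈ H} := by
    intro ω hω
    obtain ⟨hωA, hωU⟩ := hω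
    intro H hH
    refine mas_contains A hacyc hirr _ ?_ H hH
    intro e he
    rw [← hUncS]
    -- bound the spurious deviation sum B
    have hBs : ∀ p ∈ UncS, |(N : ℝ)⁻¹ * (∑ i, (if R i ω p then (1:ℝ) else 0))
        - (N : ℝ)⁻¹ * (∑ i, (if R i ω p.swap then (1:ℝ) else 0))| ≤ sU := by
      intro p hp
      have hdiff : (N : ℝ)⁻¹ * (∑ i, (if R i ω p then (1:ℝ) else 0))
          - (N : ℝ)⁻¹ * (∑ i, (if R i ω p.swap then (1:ℝ) else 0))
          = (N : ℝ)⁻¹ * ∑ i, ((if R i ω p then (1:ℝ) else 0)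
              - (if R i ω p.swap then (1:ℝ) else 0)) := by
        rw [Finset.sum_sub_distrib, mul_sub]
      rw [hdiff, abs_mul, abs_of_pos (inv_pos.2 hNr)]
      calc (N:ℝ)⁻¹ * |∑ i, ((if R i ω p then (1:ℝ) else 0)
            - (if R i ω p.swap then (1:ℝ) else 0))|
          ≤ (N:ℝ)⁻¹ * ((N:ℝ) * sU) :=
            mul_le_mul_of_nonneg_left (hωU p hp) (inv_pos.2 hNr).le
        _ = sU := by field_simp
    have hBbound : (∑ p ∈ UncS, |(N : ℝ)⁻¹ * (∑ i, (if R i ω p then (1:ℝ) else 0))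
        - (N : ℝ)⁻¹ * (∑ i, (if R i ω p.swap then (1:ℝ) else 0))|) ≤ (3/4)*ε := by
      calc (∑ p ∈ UncS, |(N : ℝ)⁻¹ * (∑ i, (if R i ω p then (1:ℝ) else 0))
            - (N : ℝ)⁻¹ * (∑ i, (if R i ω p.swap then (1:ℝ) else 0))|)
          ≤ UncS.card • sU := Finset.sum_le_card_nsmul _ _ _ hBs
        _ = (UncS.card : ℝ) * sU := nsmul_eq_mul _ _
        _ ≤ (3/4)*ε := by
            rw [hsU]
            rcases eq_or_ne ((UncS.card : ℝ)) 0 with hc | hc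
            · rw [hc]; simp; positivity
            · rw [mul_div_assoc']
              rw [mul_comm, mul_div_assoc, div_self hc, mul_one]
    -- the arc bounds
    have hωe := hωA e he
    have hflipsum : ∑ i, (if R i ω e.swap then (1:ℝ) else 0)
        = (N:ℝ) - ∑ i, (if R i ω e then (1:ℝ) else 0) := by
      have hone' : ∀ i : Fin N, (if R i ω e then (1:ℝ) else 0)
          + (if R i ω e.swap then (1:ℝ) else 0) = 1 := by
        intro i
        have hf : R i ω e = !R i ω e.swap := hflip i ω e.1 e.2 (by rwa [Prod.mk.eta])
        cases h2 : R i ω e.swap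
        · rw [h2] at hf
          simp at hf
          simp [hf, h2]
        · rw [h2] at hf
          simp at hf
          simp [hf, h2]
      have : ∑ i : Fin N, ((if R i ω e then (1:ℝ) else 0)
          + (if R i ω e.swap then (1:ℝ) else 0)) = (N:ℝ) := by
        rw [Finset.sum_congr rfl (fun i _ => hone' i)]
        simp
      rw [Finset.sum_add_distrib] at this
      linarith
    have hwe : (1:ℝ)/2 + (3/8)*ε < (N : ℝ)⁻¹ * ∑ i, (if R i ω e then (1:ℝ) else 0) := by
      have := mul_lt_mul_of_pos_left hωe (inv_pos.2 hNr)
      rw [← mul_assoc, inv_mul_cancel₀ (ne_of_gt hNr), one_mul] at this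
      linarith
    constructor
    · show _ < (N : ℝ)⁻¹ * ∑ i, (if R i ω e then (1:ℝ) else 0)
        - (N : ℝ)⁻¹ * ∑ i, (if R i ω e.swap then (1:ℝ) else 0)
      rw [hflipsum, mul_sub]
      rw [inv_mul_cancel₀ (ne_of_gt hNr)]
      refine lt_of_le_of_lt hBbound ?_
      linarith
    · refine lt_of_le_of_lt hBbound ?_
      show _ < (N : ℝ)⁻¹ * ∑ i, (if R i ω e then (1:ℝ) else 0)
      linarith
  -- probability bounds for the bad events
  have hBadA : ∀ e ∈ A, μ {ω | ∑ i, (if R i ω e then (1:ℝ) else 0)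
      ≤ (N:ℝ) * (1/2 + (3/8)*ε)}
      ≤ ENNReal.ofReal (Real.exp (-(N * ε^2) / 2)) := by
    intro e he
    refine (ENNReal.le_ofReal_iff_toReal_le (measure_ne_top _ _) (Real.exp_pos _).le).2 ?_
    refine arc_tail N ε hε hε2 (fun i ω => R i ω e) (fun i => hmeas i e) ?_ (hfamA e he)
    intro i
    have hdd := hflipdist i e.1 e.2 (by rwa [Prod.mk.eta])
    rw [show ({ω | R i ω (e.1, e.2) = true}) = {ω | R i ω e = true} from rfl] at hdd
    rw [hdd, hδ₁]
    congr 1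
    norm_num
    ring
  have hmemU : ∀ q ∈ UncS, q.1 < q.2 ∧ q ∉ A ∧ q.swap ∉ A := by
    intro q hq
    rw [hUncS] at hq
    exact (Finset.mem_filter.1 hq).2
  have hσ1 : ∀ q ∈ UncS, (1:ℝ) ≤ (UncS.card : ℝ) := by
    intro q hq
    exact_mod_cast Nat.one_le_iff_ne_zero.2 (Finset.card_ne_zero_of_mem hq)
  have hBadU1 : ∀ q ∈ UncS, μ {ω | (N:ℝ) * sU
      ≤ ∑ i, ((if R i ω q then (1:ℝ) else 0) - (if R i ω q.swap then (1:ℝ) else 0))}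
      ≤ ENNReal.ofReal (Real.exp (-(N * ε^2)
        / (6*(UncS.card : ℝ)^2*δ₂ + 2*(UncS.card : ℝ)*ε))) := by
    intro q hq
    obtain ⟨hlt, hqA, hqsA⟩ := hmemU q hq
    refine (ENNReal.le_ofReal_iff_toReal_le (measure_ne_top _ _) (Real.exp_pos _).le).2 ?_
    rw [hsU]
    exact pair_tail N ε hε δ₂ hδ₂0 (UncS.card : ℝ) (hσ1 q hq)
      (fun i ω => R i ω q) (fun i ω => R i ω q.swap)
      (fun i => hmeas i q) (fun i => hmeas i q.swap)
      (fun i ω => huncone i ω q.1 q.2 (ne_of_lt hlt) hqA hqsA)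
      (fun i => huncdist i q.1 q.2 (ne_of_lt hlt) hqA hqsA)
      (fun i => huncdist i q.2 q.1 (ne_of_lt hlt).symm hqsA hqA)
      (hfamU q hlt)
  have hBadU2 : ∀ q ∈ UncS, μ {ω | (N:ℝ) * sU
      ≤ ∑ i, ((if R i ω q.swap then (1:ℝ) else 0) - (if R i ω q then (1:ℝ) else 0))}
      ≤ ENNReal.ofReal (Real.exp (-(N * ε^2)
        / (6*(UncS.card : ℝ)^2*δ₂ + 2*(UncS.card : ℝ)*ε))) := by
    intro q hq
    obtain ⟨hlt, hqA, hqsA⟩ := hmemU q hq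
    refine (ENNReal.le_ofReal_iff_toReal_le (measure_ne_top _ _) (Real.exp_pos _).le).2 ?_
    rw [hsU]
    exact pair_tail N ε hε δ₂ hδ₂0 (UncS.card : ℝ) (hσ1 q hq)
      (fun i ω => R i ω q.swap) (fun i ω => R i ω q)
      (fun i => hmeas i q.swap) (fun i => hmeas i q)
      (fun i ω h => huncone i ω q.1 q.2 (ne_of_lt hlt) hqA hqsA ⟨h.2, h.1⟩)
      (fun i => huncdist i q.2 q.1 (ne_of_lt hlt).symm hqsA hqA)
      (fun i => huncdist i q.1 q.2 (ne_of_lt hlt) hqA hqsA)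
      (hfamU' q hlt)
  -- the union bound
  have hGc_sub : Gᶜ ⊆ (⋃ e ∈ A, {ω | ∑ i, (if R i ω e then (1:ℝ) else 0)
        ≤ (N:ℝ) * (1/2 + (3/8)*ε)})
      ∪ (⋃ q ∈ UncS, ({ω | (N:ℝ) * sU ≤ ∑ i, ((if R i ω q then (1:ℝ) else 0)
          - (if R i ω q.swap then (1:ℝ) else 0))}
        ∪ {ω | (N:ℝ) * sU ≤ ∑ i, ((if R i ω q.swap then (1:ℝ) else 0)
          - (if R i ω q then (1:ℝ) else 0))})) := by
    intro ω hω
    simp only [hG, Set.mem_compl_iff, Set.mem_setOf_eq] at hω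
    by_cases h1 : ∀ e ∈ A, (N:ℝ)*(1/2 + (3/8)*ε) < ∑ i, (if R i ω e then (1:ℝ) else 0)
    · have h2 : ¬ ∀ q ∈ UncS, |∑ i, ((if R i ω q then (1:ℝ) else 0)
          - (if R i ω q.swap then (1:ℝ) else 0))| ≤ (N:ℝ) * sU := fun h2 => hω ⟨h1, h2⟩
      push_neg at h2
      obtain ⟨q, hq, hgt⟩ := h2
      refine Or.inr (Set.mem_biUnion hq ?_)
      rcases lt_abs.1 hgt with h | h
      · exact Or.inl h.le
      · refine Or.inr ?_
        show (N:ℝ) * sU ≤ ∑ i, ((if R i ω q.swap then (1:ℝ) else 0)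
          - (if R i ω q then (1:ℝ) else 0))
        have heq : ∑ i, ((if R i ω q.swap then (1:ℝ) else 0)
            - (if R i ω q then (1:ℝ) else 0))
            = -∑ i, ((if R i ω q then (1:ℝ) else 0)
              - (if R i ω q.swap then (1:ℝ) else 0)) := by
          rw [← Finset.sum_neg_distrib]
          exact Finset.sum_congr rfl (fun i _ => by ring)
        rw [heq]
        linarith
    · push_neg at h1
      obtain ⟨e, he, hle⟩ := h1
      exact Or.inl (Set.mem_biUnion he hle)
  have hE₁pos := (Real.exp_pos (-(N * ε^2) / 2)).le
  have hE₂pos := (Real.exp_pos (-(N * ε^2)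
      / (6*(UncS.card : ℝ)^2*δ₂ + 2*(UncS.card : ℝ)*ε))).le
  have hGc : μ Gᶜ ≤ ENNReal.ofReal ((A.card : ℝ) * Real.exp (-(N * ε^2) / 2)
      + (UncS.card : ℝ) * (2 * Real.exp (-(N * ε^2)
        / (6*(UncS.card : ℝ)^2*δ₂ + 2*(UncS.card : ℝ)*ε)))) := by
    calc μ Gᶜ ≤ _ := measure_mono hGc_sub
      _ ≤ _ := measure_union_le _ _
      _ ≤ (∑ e ∈ A, μ {ω | ∑ i, (if R i ω e then (1:ℝ) else 0)
            ≤ (N:ℝ) * (1/2 + (3/8)*ε)})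
          + ∑ q ∈ UncS, μ ({ω | (N:ℝ) * sU ≤ ∑ i, ((if R i ω q then (1:ℝ) else 0)
              - (if R i ω q.swap then (1:ℝ) else 0))}
            ∪ {ω | (N:ℝ) * sU ≤ ∑ i, ((if R i ω q.swap then (1:ℝ) else 0)
              - (if R i ω q then (1:ℝ) else 0))}) :=
          add_le_add (measure_biUnion_finset_le _ _) (measure_biUnion_finset_le _ _)
      _ ≤ (∑ _e ∈ A, ENNReal.ofReal (Real.exp (-(N * ε^2) / 2)))
          + ∑ _q ∈ UncS, (ENNReal.ofReal (Real.exp (-(N * ε^2)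
              / (6*(UncS.card : ℝ)^2*δ₂ + 2*(UncS.card : ℝ)*ε)))
            + ENNReal.ofReal (Real.exp (-(N * ε^2)
              / (6*(UncS.card : ℝ)^2*δ₂ + 2*(UncS.card : ℝ)*ε)))) := by
          refine add_le_add (Finset.sum_le_sum (fun e he => hBadA e he))
            (Finset.sum_le_sum (fun q hq => ?_))
          exact le_trans (measure_union_le _ _) (add_le_add (hBadU1 q hq) (hBadU2 q hq))
      _ = ENNReal.ofReal ((A.card : ℝ) * Real.exp (-(N * ε^2) / 2)
          + (UncS.card : ℝ) * (2 * Real.exp (-(N * ε^2)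
            / (6*(UncS.card : ℝ)^2*δ₂ + 2*(UncS.card : ℝ)*ε)))) := by
          rw [Finset.sum_const, Finset.sum_const]
          simp only [nsmul_eq_mul]
          rw [← ENNReal.ofReal_natCast A.card, ← ENNReal.ofReal_natCast UncS.card,
            ← ENNReal.ofReal_add hE₂pos hE₂pos,
            ← ENNReal.ofReal_mul (Nat.cast_nonneg _),
            ← ENNReal.ofReal_mul (Nat.cast_nonneg _),
            ← ENNReal.ofReal_add (by positivity) (by positivity)]
          congr 1
          ring
  refine final_wrap G _ hGT ?_ hGc ?_
  · exact add_nonneg (mul_nonneg (Nat.cast_nonneg _) hE₁pos)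
      (mul_nonneg (Nat.cast_nonneg _) (mul_nonneg (by norm_num) hE₂pos))
  · have h1 : (0:ℝ) ≤ (A.card : ℝ) * Real.exp (-(N * ε^2) / 2) := by positivity
    linarith [h1]
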